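/- arXiv:1910.05871 — 7 statements merged into one kernel-verified Lean document; each statement's English description precedes it below -/
import Mathlib

section
/- For a collision-free solution of the n-body problem with energy h > 0 defined on [0,∞) along which U(q(t)) ≤ K is bounded, there are constants C > 0, t₀ > 0 with r(t) ≤ C t for t ≥ t₀, and hence the rescaled time τ(t) = ∫_0^t ds/r(s) tends to +∞ as t → +∞. -/
open Finset Filter

noncomputable def pot {d n : ℕ} (m : Fin n → ℝ) (x : Fin n → EuclideanSpace ℝ (Fin d)) : ℝ :=
  ∑ p ∈ Finset.univ.filter (fun p : Fin n × Fin n => p.1 < p.2),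
    m p.1 * m p.2 / ‖x p.1 - x p.2‖

lemma mono_aux {f f' : ℝ → ℝ} (hf : ∀ t ∈ Set.Ici (0:ℝ), HasDerivWithinAt f (f' t) (Set.Ici 0) t)
    (h0 : ∀ t ∈ Set.Ici (0:ℝ), 0 ≤ f' t) : MonotoneOn f (Set.Ici 0) := by
  apply monotoneOn_of_deriv_nonneg (convex_Ici 0)
  · exact fun t ht => (hf t ht).continuousWithinAt
  · intro x hx
    rw [interior_Ici] at hx
    exact ((hf x (Set.mem_Ici.mpr (le_of_lt hx))).hasDerivAt (Ici_mem_nhds hx)).differentiableAt.differentiableWithinAt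
  · intro x hx
    rw [interior_Ici] at hx
    rw [((hf x (Set.mem_Ici.mpr (le_of_lt hx))).hasDerivAt (Ici_mem_nhds hx)).deriv]
    exact h0 x (Set.mem_Ici.mpr (le_of_lt hx))

lemma lagrange {d n : ℕ} (m : Fin n → ℝ) (x : Fin n → EuclideanSpace ℝ (Fin d))
    (hx : ∀ i j, i ≠ j → x i ≠ x j) :
    ∑ i, (inner ℝ (x i) (∑ j ∈ Finset.univ.filter (fun j => j ≠ i),
        (m i * m j / ‖x i - x j‖ ^ 3) • (x j - x i)) : ℝ) = - pot m x := by
  set f : Fin n → Fin n → ℝ := fun i j =>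
    (m i * m j / ‖x i - x j‖ ^ 3) * (inner ℝ (x i) (x j - x i) : ℝ) with hf
  have lhs_eq : ∑ i, (inner ℝ (x i) (∑ j ∈ Finset.univ.filter (fun j => j ≠ i),
        (m i * m j / ‖x i - x j‖ ^ 3) • (x j - x i)) : ℝ)
      = ∑ p : Fin n × Fin n, if p.2 ≠ p.1 then f p.1 p.2 else 0 := by
    rw [Fintype.sum_prod_type]
    refine Finset.sum_congr rfl fun i _ => ?_
    rw [inner_sum, Finset.sum_filter]
    refine Finset.sum_congr rfl fun j _ => ?_
    by_cases hji : j ≠ i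
    · rw [if_pos hji, if_pos hji, real_inner_smul_right]
    · rw [if_neg hji, if_neg hji]
  have swap_eq : (∑ p : Fin n × Fin n, if p.2 ≠ p.1 then f p.1 p.2 else 0)
      = ∑ p : Fin n × Fin n, if p.1 ≠ p.2 then f p.2 p.1 else 0 :=
    Fintype.sum_equiv (Equiv.prodComm _ _) _ _ (fun p => rfl)
  have pair : ∀ i j : Fin n, i ≠ j → f i j + f j i = -(m i * m j / ‖x i - x j‖) := by
    intro i j hij
    have hne : x i - x j ≠ 0 := sub_ne_zero.mpr (hx i j hij)
    have hnorm : (0:ℝ) < ‖x i - x j‖ := norm_pos_iff.mpr hne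
    have hrev : ‖x j - x i‖ = ‖x i - x j‖ := norm_sub_rev _ _
    have hinner : (inner ℝ (x i) (x j - x i) : ℝ) + (inner ℝ (x j) (x i - x j) : ℝ)
        = -(‖x i - x j‖ ^ 2) := by
      have : (inner ℝ (x i) (x j - x i) : ℝ) + (inner ℝ (x j) (x i - x j) : ℝ)
          = -(inner ℝ (x i - x j) (x i - x j) : ℝ) := by
        simp [inner_sub_left, inner_sub_right, real_inner_comm]
        rw [norm_sub_sq_real]; ring
      rw [this, real_inner_self_eq_norm_sq]
    have hmul : m j * m i = m i * m j := mul_comm _ _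
    have step : f i j + f j i = m i * m j / ‖x i - x j‖ ^ 3 * (-(‖x i - x j‖ ^ 2)) := by
      rw [hf]
      simp only [hrev, hmul, ← mul_add, hinner]
    rw [step]
    have hne' : ‖x i - x j‖ ≠ 0 := ne_of_gt hnorm
    field_simp
  have combine : (∑ p : Fin n × Fin n, if p.2 ≠ p.1 then f p.1 p.2 else 0)
      + (∑ p : Fin n × Fin n, if p.1 ≠ p.2 then f p.2 p.1 else 0)
      = ∑ p : Fin n × Fin n, if p.1 ≠ p.2 then -(m p.1 * m p.2 / ‖x p.1 - x p.2‖) else 0 := by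
    rw [← Finset.sum_add_distrib]
    refine Finset.sum_congr rfl fun p _ => ?_
    by_cases hp : p.1 ≠ p.2
    · rw [if_pos hp, if_pos hp, if_pos (Ne.symm hp), pair _ _ hp]
    · rw [if_neg hp, if_neg hp, if_neg (fun hc => hp (Ne.symm hc)), add_zero]
  have symmg : ∀ i j : Fin n, m i * m j / ‖x i - x j‖ = m j * m i / ‖x j - x i‖ := by
    intro i j; rw [mul_comm, norm_sub_rev]
  have splitg : (∑ p : Fin n × Fin n, if p.1 ≠ p.2 then m p.1 * m p.2 / ‖x p.1 - x p.2‖ else 0)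
      = 2 * pot m x := by
    have e1 : (∑ p : Fin n × Fin n, if p.1 ≠ p.2 then m p.1 * m p.2 / ‖x p.1 - x p.2‖ else 0)
        = (∑ p : Fin n × Fin n, if p.1 < p.2 then m p.1 * m p.2 / ‖x p.1 - x p.2‖ else 0)
        + (∑ p : Fin n × Fin n, if p.2 < p.1 then m p.1 * m p.2 / ‖x p.1 - x p.2‖ else 0) := by
      rw [← Finset.sum_add_distrib]
      refine Finset.sum_congr rfl fun p _ => ?_
      rcases lt_trichotomy p.1 p.2 with hlt | heq | hgt
      · rw [if_pos (ne_of_lt hlt), if_pos hlt, if_neg (asymm hlt), add_zero]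
      · rw [if_neg (by simp [heq]), if_neg (by simp [heq]), if_neg (by simp [heq]), add_zero]
      · rw [if_pos (ne_of_gt hgt), if_neg (asymm hgt), if_pos hgt, zero_add]
    have e2 : (∑ p : Fin n × Fin n, if p.2 < p.1 then m p.1 * m p.2 / ‖x p.1 - x p.2‖ else 0)
        = ∑ p : Fin n × Fin n, if p.1 < p.2 then m p.1 * m p.2 / ‖x p.1 - x p.2‖ else 0 := by
      refine Fintype.sum_equiv (Equiv.prodComm _ _) _ _ fun p => ?_
      simp only [Equiv.prodComm_apply, Prod.fst_swap, Prod.snd_swap]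
      by_cases hp : p.2 < p.1
      · simp only [if_pos hp]; rw [symmg]; exact (if_pos hp).symm
      · simp only [if_neg hp]; exact (if_neg hp).symm
    have e3 : (∑ p : Fin n × Fin n, if p.1 < p.2 then m p.1 * m p.2 / ‖x p.1 - x p.2‖ else 0)
        = pot m x := by
      rw [pot, Finset.sum_filter]
    rw [e1, e2, e3]; ring
  have neg_eq : (∑ p : Fin n × Fin n, if p.1 ≠ p.2 then -(m p.1 * m p.2 / ‖x p.1 - x p.2‖) else 0)
      = -(2 * pot m x) := by
    rw [← splitg, ← Finset.sum_neg_distrib]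
    refine Finset.sum_congr rfl fun p _ => ?_
    by_cases hp : p.1 ≠ p.2
    · rw [if_pos hp, if_pos hp]
    · rw [if_neg hp, if_neg hp, neg_zero]
  rw [lhs_eq]
  have := combine
  rw [← swap_eq, neg_eq] at this
  linarith

/-- With U bounded along the solution, r(t) ≤ C t for large t, and the rescaled time
τ(t) = ∫₀ᵗ ds/r(s) tends to +∞. -/
theorem stmt2 {d n : ℕ} (m : Fin n → ℝ) (hm : ∀ i, 0 < m i)
    (q ξ : ℝ → Fin n → EuclideanSpace ℝ (Fin d)) (h K : ℝ) (hh : 0 < h)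
    (hfree : ∀ t ∈ Set.Ici (0:ℝ), ∀ i j, i ≠ j → q t i ≠ q t j)
    (hcm : ∀ t ∈ Set.Ici (0:ℝ), ∑ i, m i • q t i = 0)
    (hq : ∀ t ∈ Set.Ici (0:ℝ), ∀ i,
      HasDerivWithinAt (fun s => q s i) (ξ t i) (Set.Ici 0) t)
    (hnewton : ∀ t ∈ Set.Ici (0:ℝ), ∀ i, HasDerivWithinAt (fun s => ξ s i)
      ((m i)⁻¹ • ∑ j ∈ Finset.univ.filter (fun j => j ≠ i),
        (m i * m j / ‖q t i - q t j‖ ^ 3) • (q t j - q t i)) (Set.Ici 0) t)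
    (henergy : ∀ t ∈ Set.Ici (0:ℝ),
      (1/2) * ∑ i, m i * ‖ξ t i‖ ^ 2 - pot m (q t) = h)
    (hUbound : ∀ t ∈ Set.Ici (0:ℝ), pot m (q t) ≤ K) :
    ∃ C > (0:ℝ), ∃ t₀ > (0:ℝ),
      (∀ t ≥ t₀, Real.sqrt (∑ i, m i * ‖q t i‖ ^ 2) ≤ C * t) ∧
      Tendsto (fun t => ∫ s in (0:ℝ)..t,
        (Real.sqrt (∑ i, m i * ‖q s i‖ ^ 2))⁻¹) atTop atTop := by
  -- nonnegativity of the potential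
  have hU0 : ∀ y : Fin n → EuclideanSpace ℝ (Fin d), 0 ≤ pot m y := by
    intro y
    refine Finset.sum_nonneg fun p _ => ?_
    exact div_nonneg (mul_nonneg (hm p.1).le (hm p.2).le) (norm_nonneg _)
  -- at least two bodies
  have hn2 : 2 ≤ n := by
    by_contra hn
    push_neg at hn
    interval_cases n
    · have := henergy 0 Set.self_mem_Ici
      simp [pot] at this
      linarith
    · have hpot0 : ∀ t : ℝ, pot m (q t) = 0 := by
        intro t
        rw [pot, Finset.sum_eq_zero]
        intro p hp
        rw [Finset.mem_filter] at hp
        have h1 := p.1.isLt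
        have h2 := p.2.isLt
        have := hp.2
        rw [Fin.lt_def] at this
        omega
      have hq0 : ∀ t ∈ Set.Ici (0:ℝ), q t 0 = 0 := by
        intro t ht
        have := hcm t ht
        rw [Fin.sum_univ_one] at this
        exact (smul_eq_zero.mp this).resolve_left (ne_of_gt (hm 0))
      have hxi0 : ξ 0 0 = 0 := by
        have h1 : HasDerivWithinAt (fun s => q s 0) (ξ 0 0) (Set.Ici 0) 0 := hq 0 Set.self_mem_Ici 0
        have h2 : HasDerivWithinAt (fun s => q s 0) 0 (Set.Ici 0) 0 := by
          refine (hasDerivWithinAt_const 0 (Set.Ici (0:ℝ)) (0 : EuclideanSpace ℝ (Fin d))).congr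
            (fun s hs => hq0 s hs) (hq0 0 Set.self_mem_Ici)
        have hud : UniqueDiffWithinAt ℝ (Set.Ici (0:ℝ)) 0 := uniqueDiffOn_Ici 0 0 Set.self_mem_Ici
        rw [← h1.derivWithin hud, ← h2.derivWithin hud]
      have := henergy 0 Set.self_mem_Ici
      rw [hpot0, Fin.sum_univ_one, hxi0] at this
      simp at this
      linarith
  -- abbreviations
  set I : ℝ → ℝ := fun t => ∑ i, m i * ‖q t i‖ ^ 2 with hIdef
  set J : ℝ → ℝ := fun t => 2 * ∑ i, m i * (inner ℝ (q t i) (ξ t i) : ℝ) with hJdef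
  have hI' : ∀ t ∈ Set.Ici (0:ℝ), HasDerivWithinAt I (J t) (Set.Ici 0) t := by
    intro t ht
    have hterm : ∀ i ∈ Finset.univ, HasDerivWithinAt
        (fun s => m i * (inner ℝ (q s i) (q s i) : ℝ))
        (m i * ((inner ℝ (q t i) (ξ t i) : ℝ) + (inner ℝ (ξ t i) (q t i) : ℝ))) (Set.Ici 0) t :=
      fun i _ => ((hq t ht i).inner ℝ (hq t ht i)).const_mul (m i)
    have hsum := HasDerivWithinAt.fun_sum hterm
    have hfun : I = fun s => ∑ i, m i * (inner ℝ (q s i) (q s i) : ℝ) := by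
      funext s
      exact Finset.sum_congr rfl fun i _ => by rw [real_inner_self_eq_norm_sq]
    rw [hfun]
    refine hsum.congr_deriv (Eq.symm ?_)
    show 2 * ∑ i, m i * (inner ℝ (q t i) (ξ t i) : ℝ) = _
    rw [Finset.mul_sum]
    exact Finset.sum_congr rfl fun i _ => by rw [real_inner_comm (ξ t i) (q t i)]; ring
  have hJ' : ∀ t ∈ Set.Ici (0:ℝ),
      HasDerivWithinAt J (4 * h + 2 * pot m (q t)) (Set.Ici 0) t := by
    intro t ht
    have hterm : ∀ i ∈ Finset.univ, HasDerivWithinAt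
        (fun s => m i * (inner ℝ (q s i) (ξ s i) : ℝ))
        (m i * ((inner ℝ (q t i) ((m i)⁻¹ • ∑ j ∈ Finset.univ.filter (fun j => j ≠ i),
            (m i * m j / ‖q t i - q t j‖ ^ 3) • (q t j - q t i)) : ℝ)
          + (inner ℝ (ξ t i) (ξ t i) : ℝ))) (Set.Ici 0) t :=
      fun i _ => ((hq t ht i).inner ℝ (hnewton t ht i)).const_mul (m i)
    have hsum := (HasDerivWithinAt.fun_sum hterm).const_mul (2:ℝ)
    refine hsum.congr_deriv (Eq.symm ?_)
    have expand : ∀ i : Fin n,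
        m i * ((inner ℝ (q t i) ((m i)⁻¹ • ∑ j ∈ Finset.univ.filter (fun j => j ≠ i),
            (m i * m j / ‖q t i - q t j‖ ^ 3) • (q t j - q t i)) : ℝ)
          + (inner ℝ (ξ t i) (ξ t i) : ℝ))
        = (inner ℝ (q t i) (∑ j ∈ Finset.univ.filter (fun j => j ≠ i),
            (m i * m j / ‖q t i - q t j‖ ^ 3) • (q t j - q t i)) : ℝ)
          + m i * ‖ξ t i‖ ^ 2 := by
      intro i
      rw [real_inner_smul_right, real_inner_self_eq_norm_sq, mul_add, ← mul_assoc,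
        mul_inv_cancel₀ (ne_of_gt (hm i)), one_mul]
    have hsum_eq : (∑ i, m i * ((inner ℝ (q t i) ((m i)⁻¹ • ∑ j ∈ Finset.univ.filter (fun j => j ≠ i),
            (m i * m j / ‖q t i - q t j‖ ^ 3) • (q t j - q t i)) : ℝ)
          + (inner ℝ (ξ t i) (ξ t i) : ℝ)))
        = - pot m (q t) + ∑ i, m i * ‖ξ t i‖ ^ 2 := by
      rw [Finset.sum_congr rfl fun i _ => expand i, Finset.sum_add_distrib,
        lagrange m (q t) (hfree t ht)]
    have hkin : ∑ i, m i * ‖ξ t i‖ ^ 2 = 2 * h + 2 * pot m (q t) := by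
      have := henergy t ht
      linarith
    rw [hsum_eq, hkin]
    ring
  -- the constant A bounds (1/2) I''
  set A : ℝ := 4 * h + 2 * K with hAdef
  have hK0 : 0 ≤ K := le_trans (hU0 (q 0)) (hUbound 0 Set.self_mem_Ici)
  have hA : 0 < A := by positivity
  -- ψ := (J 0 + A t) - J t is monotone, hence J t ≤ J 0 + A t
  have hψmono : MonotoneOn (fun t => (J 0 + A * t) - J t) (Set.Ici 0) := by
    apply mono_aux (f' := fun t => A - (4 * h + 2 * pot m (q t)))
    · intro t ht
      exact (((hasDerivAt_id t).const_mul A).const_add (J 0)).hasDerivWithinAt.sub (hJ' t ht) |>.congr_deriv (by ring)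
    · intro t ht
      have := hUbound t ht
      rw [hAdef]
      linarith
  have hJle : ∀ t ∈ Set.Ici (0:ℝ), J t ≤ J 0 + A * t := by
    intro t ht
    have := hψmono Set.self_mem_Ici ht ht
    simp only at this
    linarith
  -- φ := (I 0 + J 0 t + A/2 t²) - I t is monotone, hence the quadratic bound on I
  have hφmono : MonotoneOn (fun t => (I 0 + J 0 * t + A / 2 * t ^ 2) - I t) (Set.Ici 0) := by
    apply mono_aux (f' := fun t => (J 0 + A * t) - J t)
    · intro t ht
      have hpoly : HasDerivAt (fun s : ℝ => I 0 + J 0 * s + A / 2 * s ^ 2) (J 0 + A * t) t := by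
        have hb : HasDerivAt (fun s : ℝ => I 0 + J 0 * s) (J 0) t := by
          simpa using ((hasDerivAt_id t).const_mul (J 0)).const_add (I 0)
        have hc : HasDerivAt (fun s : ℝ => A / 2 * s ^ 2) (A * t) t := by
          have := (hasDerivAt_pow 2 t).const_mul (A / 2)
          exact this.congr_deriv (by norm_num; ring)
        exact hb.add hc
      exact hpoly.hasDerivWithinAt.sub (hI' t ht)
    · intro t ht
      have := hJle t ht
      linarith
  have hIquad : ∀ t ∈ Set.Ici (0:ℝ), I t ≤ I 0 + J 0 * t + A / 2 * t ^ 2 := by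
    intro t ht
    have := hφmono Set.self_mem_Ici ht ht
    simp only at this
    linarith
  -- positivity of I
  have hI0 : ∀ s : ℝ, 0 ≤ I s := by
    intro s
    exact Finset.sum_nonneg fun i _ => mul_nonneg (hm i).le (by positivity)
  have hIpos : ∀ t ∈ Set.Ici (0:ℝ), 0 < I t := by
    intro t ht
    have hne := hfree t ht ⟨0, by omega⟩ ⟨1, by omega⟩ (by simp [Fin.ext_iff])
    have hex : ∃ i, q t i ≠ 0 := by
      by_contra hc
      push_neg at hc
      exact hne (by rw [hc, hc])
    obtain ⟨i, hi⟩ := hex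
    have h1 : 0 < m i * ‖q t i‖ ^ 2 :=
      mul_pos (hm i) (pow_pos (norm_pos_iff.mpr hi) 2)
    calc (0:ℝ) < m i * ‖q t i‖ ^ 2 := h1
    _ ≤ I t := Finset.single_le_sum (f := fun j => m j * ‖q t j‖ ^ 2)
        (fun j _ => mul_nonneg (hm j).le (by positivity)) (Finset.mem_univ i)
  -- the linear bound on r
  set B : ℝ := I 0 + |J 0| + A / 2 with hBdef
  have hB : 0 < B := by
    have e1 := hI0 0
    have e2 := abs_nonneg (J 0)
    rw [hBdef]; linarith
  set C : ℝ := Real.sqrt B + 1 with hCdef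
  have hC : 0 < C := by positivity
  have hrC : ∀ t ≥ (1:ℝ), Real.sqrt (I t) ≤ C * t := by
    intro t ht1
    have ht0 : (0:ℝ) ≤ t := by linarith
    have h1 : I t ≤ B * t ^ 2 := by
      have h2 := hIquad t (Set.mem_Ici.mpr (by linarith))
      have h3 : J 0 * t ≤ |J 0| * t := mul_le_mul_of_nonneg_right (le_abs_self _) ht0
      have h4 := hI0 0
      have e1 : 1 ≤ t ^ 2 := by nlinarith
      have e2 : t ≤ t ^ 2 := by nlinarith
      rw [hBdef]
      nlinarith [mul_nonneg h4 (sub_nonneg.mpr e1),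
        mul_nonneg (abs_nonneg (J 0)) (sub_nonneg.mpr e2), hA.le]
    calc Real.sqrt (I t) ≤ Real.sqrt (B * t ^ 2) := Real.sqrt_le_sqrt h1
    _ = Real.sqrt B * t := by
        rw [Real.sqrt_mul hB.le, Real.sqrt_sq ht0]
    _ ≤ C * t := by
        have : Real.sqrt B ≤ C := by rw [hCdef]; linarith
        exact mul_le_mul_of_nonneg_right this ht0
  -- continuity and integrability
  have hIc : ContinuousOn I (Set.Ici 0) := fun t ht => (hI' t ht).continuousWithinAt
  have hrinv : ContinuousOn (fun s => (Real.sqrt (I s))⁻¹) (Set.Ici 0) := by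
    apply ContinuousOn.inv₀
    · exact Real.continuous_sqrt.comp_continuousOn hIc
    · exact fun t ht => ne_of_gt (Real.sqrt_pos.mpr (hIpos t ht))
  have hInt : ∀ a b : ℝ, 0 ≤ a → 0 ≤ b →
      IntervalIntegrable (fun s => (Real.sqrt (I s))⁻¹) MeasureTheory.volume a b := by
    intro a b ha hb
    apply (hrinv.mono ?_).intervalIntegrable
    intro x hx
    rcases Set.mem_uIcc.mp hx with ⟨h1, _⟩ | ⟨h1, _⟩ <;> · rw [Set.mem_Ici]; linarith
  refine ⟨C, hC, 1, one_pos, fun t ht => hrC t ht, ?_⟩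
  have hτ : ∀ t ≥ (1:ℝ),
      (∫ s in (0:ℝ)..1, (Real.sqrt (I s))⁻¹) + C⁻¹ * Real.log t
      ≤ ∫ s in (0:ℝ)..t, (Real.sqrt (I s))⁻¹ := by
    intro t ht1
    have ht0 : (0:ℝ) ≤ t := by linarith
    have hsplit := intervalIntegral.integral_add_adjacent_intervals
      (hInt 0 1 le_rfl zero_le_one) (hInt 1 t zero_le_one ht0)
    have huIcc : Set.uIcc (1:ℝ) t = Set.Icc 1 t := Set.uIcc_of_le ht1
    have hzero : (0:ℝ) ∉ Set.uIcc (1:ℝ) t := by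
      rw [huIcc]
      rintro ⟨h0, _⟩
      linarith
    have hint2 : IntervalIntegrable (fun s : ℝ => C⁻¹ * s⁻¹) MeasureTheory.volume 1 t := by
      apply ContinuousOn.intervalIntegrable
      apply ContinuousOn.mul continuousOn_const
      apply ContinuousOn.inv₀ continuousOn_id
      intro x hx
      rw [huIcc] at hx
      intro hc
      simp only [id_eq] at hc
      have h1 := hx.1
      rw [hc] at h1
      linarith
    have hle : (∫ s in (1:ℝ)..t, C⁻¹ * s⁻¹) ≤ ∫ s in (1:ℝ)..t, (Real.sqrt (I s))⁻¹ := by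
      apply intervalIntegral.integral_mono_on ht1 hint2 (hInt 1 t zero_le_one ht0)
      intro s hs
      have hs0 : (0:ℝ) < s := lt_of_lt_of_le one_pos hs.1
      have hrpos : 0 < Real.sqrt (I s) := Real.sqrt_pos.mpr (hIpos s (by rw [Set.mem_Ici]; linarith))
      have hrle : Real.sqrt (I s) ≤ C * s := hrC s hs.1
      calc C⁻¹ * s⁻¹ = (C * s)⁻¹ := (mul_inv _ _).symm
      _ ≤ (Real.sqrt (I s))⁻¹ := inv_anti₀ hrpos hrle
    have hcomp : (∫ s in (1:ℝ)..t, C⁻¹ * s⁻¹) = C⁻¹ * Real.log t := by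
      rw [intervalIntegral.integral_const_mul, integral_inv hzero, div_one]
    rw [← hsplit]
    rw [hcomp] at hle
    linarith
  have hlim : Tendsto (fun t : ℝ => (∫ s in (0:ℝ)..1, (Real.sqrt (I s))⁻¹) + C⁻¹ * Real.log t)
      atTop atTop :=
    tendsto_atTop_add_const_left _ _ (Real.tendsto_log_atTop.const_mul_atTop (inv_pos.mpr hC))
  exact tendsto_atTop_mono' atTop ((eventually_ge_atTop 1).mono fun t ht => hτ t ht) hlim
end

section
/- In the McGehee-type coordinates (ρ, s, v, w) with ρ = 1/r, q = r s, ‖s‖ = 1, ξ = v s + w, ⟨s,w⟩ = 0 (all norms and inner products with respect to the mass metric), and rescaled time dt = r dτ, Newton's equations for the n-body problem are equivalent to the system ρ' = −vρ, s' = w, v' = ‖w‖² − ρU(s), w' = ρ(∇U(s) + U(s)s) − vw − ‖w‖²s, and the energy relation becomes (1/2)v² + (1/2)‖w‖² − ρU(s) = h. -/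
lemma euler_id {E : Type*} [NormedAddCommGroup E] [InnerProductSpace ℝ E] [CompleteSpace E]
    (U : E → ℝ) (gradU : E → E)
    (hgrad : ∀ x : E, x ≠ 0 → HasGradientAt U (gradU x) x)
    (hhom : ∀ c : ℝ, 0 < c → ∀ x : E, U (c • x) = c⁻¹ * U x)
    (x : E) (hx : x ≠ 0) : (inner ℝ (gradU x) x : ℝ) = - U x := by
  have hc : HasDerivAt (fun c : ℝ => c • x) x 1 := by
    simpa using (hasDerivAt_id (1:ℝ)).smul_const x
  have h1 : HasDerivAt (fun c : ℝ => U (c • x)) (inner ℝ (gradU x) x : ℝ) 1 := by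
    have : HasGradientAt U (gradU x) ((1:ℝ) • x) := by simpa using hgrad x hx
    simpa [Function.comp_def] using this.hasFDerivAt.comp_hasDerivAt 1 hc
  have h2 : HasDerivAt (fun c : ℝ => U (c • x)) (-U x) 1 := by
    have h2' : HasDerivAt (fun c : ℝ => c⁻¹ * U x) (-U x) 1 := by
      simpa using ((hasDerivAt_inv (by norm_num : (1:ℝ) ≠ 0)).mul_const (U x))
    refine h2'.congr_of_eventuallyEq ?_
    filter_upwards [eventually_gt_nhds (by norm_num : (0:ℝ) < 1)] with c hc'
    exact hhom c hc' x
  exact h1.unique h2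

/-- Newton's equations are equivalent to the McGehee-type system in the blown-up
variables (ρ, s, v, w) with rescaled time dt = r dτ, and the energy relation becomes
(1/2)v² + (1/2)‖w‖² − ρU(s) = h. -/
theorem stmt3 {E : Type*} [NormedAddCommGroup E] [InnerProductSpace ℝ E] [CompleteSpace E]
    (U : E → ℝ) (gradU : E → E)
    (hgrad : ∀ x : E, x ≠ 0 → HasGradientAt U (gradU x) x)
    (hhom : ∀ c : ℝ, 0 < c → ∀ x : E, U (c • x) = c⁻¹ * U x)
    (hgradhom : ∀ c : ℝ, 0 < c → ∀ x : E, gradU (c • x) = (c ^ 2)⁻¹ • gradU x)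
    (h : ℝ) (ρ v : ℝ → ℝ) (s w : ℝ → E) (T : ℝ → ℝ) (q ξ : ℝ → E)
    (hρpos : ∀ τ, 0 < ρ τ)
    (hsnorm : ∀ τ, ‖s τ‖ = 1)
    (hsw : ∀ τ, (inner ℝ (s τ) (w τ) : ℝ) = 0)
    (hT : ∀ τ, HasDerivAt T (ρ τ)⁻¹ τ)
    (hTsurj : Function.Surjective T)
    (hqT : ∀ τ, q (T τ) = (ρ τ)⁻¹ • s τ)
    (hξT : ∀ τ, ξ (T τ) = v τ • s τ + w τ) :
    (((∀ t, HasDerivAt q (ξ t) t) ∧ (∀ t, HasDerivAt ξ (gradU (q t)) t)) ↔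
      ((∀ τ, HasDerivAt ρ (-(v τ * ρ τ)) τ) ∧
       (∀ τ, HasDerivAt s (w τ) τ) ∧
       (∀ τ, HasDerivAt v (‖w τ‖ ^ 2 - ρ τ * U (s τ)) τ) ∧
       (∀ τ, HasDerivAt w
         (ρ τ • (gradU (s τ) + U (s τ) • s τ) - v τ • w τ - ‖w τ‖ ^ 2 • s τ) τ))) ∧
    ((∀ t, (1/2) * ‖ξ t‖ ^ 2 - U (q t) = h) ↔
      (∀ τ, (1/2) * (v τ) ^ 2 + (1/2) * ‖w τ‖ ^ 2 - ρ τ * U (s τ) = h)) := by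
  have hρne : ∀ τ, ρ τ ≠ 0 := fun τ => (hρpos τ).ne'
  have hsne : ∀ τ, s τ ≠ 0 := fun τ => by
    intro h0
    have := hsnorm τ; rw [h0, norm_zero] at this; norm_num at this
  have hss : ∀ τ, (inner ℝ (s τ) (s τ) : ℝ) = 1 := fun τ => by
    rw [real_inner_self_eq_norm_sq, hsnorm]; norm_num
  have hws : ∀ τ, (inner ℝ (w τ) (s τ) : ℝ) = 0 := fun τ => by
    rw [real_inner_comm]; exact hsw τ
  have heuler : ∀ τ, (inner ℝ (gradU (s τ)) (s τ) : ℝ) = - U (s τ) :=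
    fun τ => euler_id U gradU hgrad hhom (s τ) (hsne τ)
  have hgradf : ∀ τ, gradU ((ρ τ)⁻¹ • s τ) = (ρ τ) ^ 2 • gradU (s τ) := by
    intro τ
    rw [hgradhom _ (inv_pos.2 (hρpos τ))]
    congr 1
    rw [← inv_pow, inv_inv]
  have hUf : ∀ τ, U ((ρ τ)⁻¹ • s τ) = ρ τ * U (s τ) := by
    intro τ
    rw [hhom _ (inv_pos.2 (hρpos τ)), inv_inv]
  have hnormg : ∀ τ, ‖v τ • s τ + w τ‖ ^ 2 = (v τ) ^ 2 + ‖w τ‖ ^ 2 := by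
    intro τ
    rw [norm_add_sq_real, norm_smul, hsnorm, real_inner_smul_left, hsw]
    simp [sq_abs]
  constructor
  · constructor
    · rintro ⟨hq, hξ⟩
      -- derivatives of f = q ∘ T and g = ξ ∘ T
      have hf : ∀ τ, HasDerivAt (fun τ => q (T τ))
          ((ρ τ)⁻¹ • (v τ • s τ + w τ)) τ := by
        intro τ
        have := (hq (T τ)).scomp τ (hT τ)
        simpa [Function.comp_def, hξT τ] using this
      have hg : ∀ τ, HasDerivAt (fun τ => ξ (T τ)) (ρ τ • gradU (s τ)) τ := by
        intro τ
        have := (hξ (T τ)).scomp τ (hT τ)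
        rw [hqT τ, hgradf τ] at this
        have e : (ρ τ)⁻¹ • (ρ τ ^ 2 • gradU (s τ)) = ρ τ • gradU (s τ) := by
          rw [smul_smul]; congr 1; rw [pow_two, inv_mul_cancel_left₀ (hρne τ)]
        rw [e] at this
        simpa [Function.comp_def] using this
      -- inner products with f
      have hfval : ∀ τ, (inner ℝ (q (T τ)) (q (T τ)) : ℝ) = ((ρ τ)⁻¹) ^ 2 := by
        intro τ
        rw [hqT, real_inner_smul_left, real_inner_smul_right, hss]
        ring
      -- derivative of ρ
      have hρ' : ∀ τ, HasDerivAt ρ (-(v τ * ρ τ)) τ := by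
        intro τ
        have hφ : HasDerivAt (fun τ => (inner ℝ (q (T τ)) (q (T τ)) : ℝ))
            (2 * (((ρ τ)⁻¹) ^ 2 * v τ)) τ := by
          have := (hf τ).inner ℝ (hf τ)
          have e : (inner ℝ (q (T τ)) ((ρ τ)⁻¹ • (v τ • s τ + w τ)) : ℝ)
              = ((ρ τ)⁻¹) ^ 2 * v τ := by
            rw [hqT, real_inner_smul_left, real_inner_smul_right, inner_add_right,
              real_inner_smul_right, hss, hsw]
            ring
          have e2 : (inner ℝ ((ρ τ)⁻¹ • (v τ • s τ + w τ)) (q (T τ)) : ℝ)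
              = ((ρ τ)⁻¹) ^ 2 * v τ := by
            rw [real_inner_comm]; exact e
          rw [e, e2] at this
          refine this.congr_deriv ?_; ring
        have hφne : (inner ℝ (q (T τ)) (q (T τ)) : ℝ) ≠ 0 := by
          rw [hfval]; exact pow_ne_zero _ (inv_ne_zero (hρne τ))
        have hinv : HasDerivAt (fun τ => (inner ℝ (q (T τ)) (q (T τ)) : ℝ)⁻¹)
            (-(2 * (ρ τ ^ 2 * v τ))) τ := by
          have := hφ.inv hφne
          refine this.congr_deriv ?_
          rw [hfval]
          field_simp [hρne τ]
        have hsq : HasDerivAt (fun τ => Real.sqrt ((inner ℝ (q (T τ)) (q (T τ)) : ℝ)⁻¹))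
            (-(v τ * ρ τ)) τ := by
          have hne : ((inner ℝ (q (T τ)) (q (T τ)) : ℝ))⁻¹ ≠ 0 := inv_ne_zero hφne
          have := (Real.hasDerivAt_sqrt hne).comp τ hinv
          have e : Real.sqrt ((inner ℝ (q (T τ)) (q (T τ)) : ℝ)⁻¹) = ρ τ := by
            rw [hfval, ← inv_pow, inv_inv, Real.sqrt_sq (hρpos τ).le]
          rw [Function.comp_def] at this
          refine this.congr_deriv ?_
          rw [e]
          field_simp [hρne τ]
        have feq : (fun τ => Real.sqrt ((inner ℝ (q (T τ)) (q (T τ)) : ℝ)⁻¹)) = ρ := by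
          funext τ
          rw [hfval, ← inv_pow, inv_inv, Real.sqrt_sq (hρpos τ).le]
        rwa [feq] at hsq
      -- derivative of s
      have hs' : ∀ τ, HasDerivAt s (w τ) τ := by
        intro τ
        have := (hρ' τ).smul (hf τ)
        have feq : (ρ • fun τ => q (T τ)) = s := by
          funext τ
          simp only [Pi.smul_apply']
          rw [hqT, smul_smul, mul_inv_cancel₀ (hρne τ), one_smul]
        rw [feq] at this
        convert this using 1
        rw [hqT, smul_smul, smul_smul, mul_inv_cancel₀ (hρne τ), one_smul]
        have e2 : -(v τ * ρ τ) * (ρ τ)⁻¹ = -(v τ) := by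
          field_simp [hρne τ]
        rw [e2]
        module
      -- derivative of v
      have hv' : ∀ τ, HasDerivAt v (‖w τ‖ ^ 2 - ρ τ * U (s τ)) τ := by
        intro τ
        have := (hs' τ).inner ℝ (hg τ)
        have feq : (fun τ => (inner ℝ (s τ) (ξ (T τ)) : ℝ)) = v := by
          funext τ
          rw [hξT, inner_add_right, real_inner_smul_right, hss, hsw]
          ring
        rw [feq] at this
        refine this.congr_deriv ?_
        simp only [hξT τ, inner_add_right, real_inner_smul_right,
          real_inner_self_eq_norm_sq]
        rw [real_inner_comm (gradU (s τ)) (s τ)]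
        rw [heuler τ]
        rw [real_inner_comm (s τ) (w τ)]
        rw [hsw τ]
        ring
      refine ⟨hρ', hs', hv', ?_⟩
      -- derivative of w
      intro τ
      have := (hg τ).sub ((hv' τ).smul (hs' τ))
      have feq : ((fun τ => ξ (T τ)) - v • s) = w := by
        funext τ; simp only [Pi.sub_apply, Pi.smul_apply']; rw [hξT]; abel
      rw [feq] at this
      convert this using 1
      module
    · rintro ⟨hρ', hs', hv', hw'⟩
      -- derivatives of f and g in τ
      have hf : ∀ τ, HasDerivAt (fun τ => (ρ τ)⁻¹ • s τ)
          ((ρ τ)⁻¹ • (v τ • s τ + w τ)) τ := by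
        intro τ
        have hinv : HasDerivAt (fun τ => (ρ τ)⁻¹) (v τ * (ρ τ)⁻¹) τ := by
          have := (hρ' τ).inv (hρne τ)
          refine this.congr_deriv ?_
          field_simp [hρne τ]
        have := hinv.smul (hs' τ)
        refine this.congr_deriv ?_
        rw [smul_add, smul_smul]
        have e : (ρ τ)⁻¹ * v τ = v τ * (ρ τ)⁻¹ := by ring
        rw [e]
        module
      have hg : ∀ τ, HasDerivAt (fun τ => v τ • s τ + w τ) (ρ τ • gradU (s τ)) τ := by
        intro τ
        have := ((hv' τ).smul (hs' τ)).add (hw' τ)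
        refine this.congr_deriv ?_
        module
      -- global inverse of T
      have hmono : StrictMono T := by
        apply strictMono_of_deriv_pos
        intro x
        rw [(hT x).deriv]
        exact inv_pos.2 (hρpos x)
      let e : ℝ ≃o ℝ := StrictMono.orderIsoOfSurjective T hmono hTsurj
      have hTS : ∀ t, T (e.symm t) = t := fun t => e.apply_symm_apply t
      have hScont : Continuous (e.symm : ℝ → ℝ) := OrderIso.continuous e.symm
      have hS : ∀ t, HasDerivAt (fun t => (e.symm t : ℝ)) (ρ (e.symm t)) t := by
        intro t
        have := HasDerivAt.of_local_left_inverse (hScont.continuousAt)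
          (hT (e.symm t)) (inv_ne_zero (hρne _)) (Filter.Eventually.of_forall hTS)
        simpa using this
      have hqeq : q = fun t => (ρ (e.symm t))⁻¹ • s (e.symm t) := by
        funext t
        rw [← hTS t, hqT, hTS]
      have hξeq : ξ = fun t => v (e.symm t) • s (e.symm t) + w (e.symm t) := by
        funext t
        rw [← hTS t, hξT, hTS]
      constructor
      · intro t
        have := (hf (e.symm t)).scomp t (hS t)
        rw [show ((fun τ => (ρ τ)⁻¹ • s τ) ∘ fun t => (e.symm t : ℝ)) = q from
          by rw [hqeq]; rfl] at this
        convert this using 1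
        rw [hξeq]
        rw [smul_smul, mul_inv_cancel₀ (hρne _), one_smul]
      · intro t
        have := (hg (e.symm t)).scomp t (hS t)
        rw [show ((fun τ => v τ • s τ + w τ) ∘ fun t => (e.symm t : ℝ)) = ξ from
          by rw [hξeq]; rfl] at this
        convert this using 1
        rw [hqeq]
        simp only
        rw [hgradf, smul_smul]
        congr 1
        ring
  · constructor
    · intro H τ
      have := H (T τ)
      rw [hqT, hξT, hUf, hnormg] at this
      linarith
    · intro H t
      obtain ⟨τ, rfl⟩ := hTsurj t
      rw [hqT, hξT, hUf, hnormg]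
      linarith [H τ]
end

section
/- For the flow at infinity, governed by ρ' = 0, s' = w, v' = ‖w‖², w' = −vw − ‖w‖²s with energy constraint v² + ‖w‖² = 2h (h > 0), and for any unit vectors ξ, η with ⟨ξ,η⟩ = 0, the curve given by ρ(τ) = 0, v(τ) = √(2h) tanh(√(2h)τ), s(τ) = ξ sin θ(τ) + η cos θ(τ), w(τ) = √(2h) sech(√(2h)τ)(ξ cos θ(τ) − η sin θ(τ)), where θ(τ) = arctan(sinh(√(2h)τ)), is a solution. -/
lemma normsq_combo {E : Type*} [NormedAddCommGroup E] [InnerProductSpace ℝ E]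
    (ξ η : E) (hξ : ‖ξ‖ = 1) (hη : ‖η‖ = 1) (hor : (inner ℝ ξ η : ℝ) = 0)
    (a b : ℝ) : ‖a • ξ + b • η‖ ^ 2 = a ^ 2 + b ^ 2 := by
  rw [← real_inner_self_eq_norm_sq, real_inner_add_add_self]
  simp only [real_inner_smul_left, real_inner_smul_right,
    real_inner_self_eq_norm_sq, norm_smul, Real.norm_eq_abs, hξ, hη, hor,
    mul_one, sq_abs]
  ring

/-- The explicit great-circle curve solves the equations of the flow at infinity
and satisfies the energy constraint v² + ‖w‖² = 2h. -/
theorem stmt4 {E : Type*} [NormedAddCommGroup E] [InnerProductSpace ℝ E]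
    (ξ η : E) (hξ : ‖ξ‖ = 1) (hη : ‖η‖ = 1) (hor : (inner ℝ ξ η : ℝ) = 0)
    (h : ℝ) (hh : 0 < h) :
    let c := Real.sqrt (2 * h)
    let θ := fun τ : ℝ => Real.arctan (Real.sinh (c * τ))
    let v := fun τ : ℝ => c * Real.tanh (c * τ)
    let s := fun τ : ℝ => Real.sin (θ τ) • ξ + Real.cos (θ τ) • η
    let w := fun τ : ℝ =>
      (c / Real.cosh (c * τ)) • (Real.cos (θ τ) • ξ - Real.sin (θ τ) • η)
    ∀ τ : ℝ,
      HasDerivAt (fun _ : ℝ => (0:ℝ)) 0 τ ∧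
      HasDerivAt s (w τ) τ ∧
      HasDerivAt v (‖w τ‖ ^ 2) τ ∧
      HasDerivAt w (-(v τ) • w τ - ‖w τ‖ ^ 2 • s τ) τ ∧
      (v τ) ^ 2 + ‖w τ‖ ^ 2 = 2 * h := by
  intro c θ v s w
  have hc2 : c ^ 2 = 2 * h := Real.sq_sqrt (by linarith)
  have hsqrt : ∀ t : ℝ, Real.sqrt (1 + Real.sinh (c * t) ^ 2) = Real.cosh (c * t) := by
    intro t
    rw [show (1 : ℝ) + Real.sinh (c * t) ^ 2 = Real.cosh (c * t) ^ 2 by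
      rw [Real.cosh_sq]; ring]
    exact Real.sqrt_sq (Real.cosh_pos _).le
  have hsin : ∀ t : ℝ, Real.sin (θ t) = Real.sinh (c * t) / Real.cosh (c * t) := by
    intro t; simp only [θ, Real.sin_arctan, hsqrt t]
  have hcos : ∀ t : ℝ, Real.cos (θ t) = (Real.cosh (c * t))⁻¹ := by
    intro t; simp only [θ, Real.cos_arctan, hsqrt t, one_div]
  have hs_eq : s = fun t : ℝ =>
      (Real.sinh (c * t) / Real.cosh (c * t)) • ξ + (Real.cosh (c * t))⁻¹ • η := by
    funext t; simp only [s, hsin t, hcos t]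
  have hw_eq : w = fun t : ℝ =>
      (c * (Real.cosh (c * t))⁻¹ ^ 2) • ξ +
      (-(c * Real.sinh (c * t) * (Real.cosh (c * t))⁻¹ ^ 2)) • η := by
    funext t
    have hC := (Real.cosh_pos (c * t)).ne'
    simp only [w, hsin t, hcos t]
    match_scalars <;> ring
  intro τ
  have hC0 : Real.cosh (c * τ) ≠ 0 := (Real.cosh_pos _).ne'
  have hCS : Real.cosh (c * τ) ^ 2 = Real.sinh (c * τ) ^ 2 + 1 := Real.cosh_sq _
  have hlin : HasDerivAt (fun t : ℝ => c * t) c τ := by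
    simpa using (hasDerivAt_id τ).const_mul c
  have hsinh : HasDerivAt (fun t : ℝ => Real.sinh (c * t)) (Real.cosh (c * τ) * c) τ :=
    hlin.sinh
  have hcosh : HasDerivAt (fun t : ℝ => Real.cosh (c * t)) (Real.sinh (c * τ) * c) τ :=
    hlin.cosh
  have hinv : HasDerivAt (fun t : ℝ => (Real.cosh (c * t))⁻¹)
      (-(Real.sinh (c * τ) * c) / Real.cosh (c * τ) ^ 2) τ := hcosh.inv hC0
  have htanh : HasDerivAt (fun t : ℝ => Real.sinh (c * t) / Real.cosh (c * t))
      (c * (Real.cosh (c * τ))⁻¹ ^ 2) τ := by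
    refine (hsinh.div hcosh hC0).congr_deriv ?_
    field_simp
    linear_combination c * hCS
  have hwnorm : ‖w τ‖ ^ 2 = c ^ 2 * ((Real.cosh (c * τ))⁻¹) ^ 2 := by
    simp only [hw_eq]
    rw [normsq_combo ξ η hξ hη hor]
    field_simp
    linear_combination (-c ^ 2) * hCS
  refine ⟨hasDerivAt_const τ 0, ?_, ?_, ?_, ?_⟩
  · -- s' = w
    simp only [hs_eq, hw_eq]
    refine ((htanh.smul_const ξ).add (hinv.smul_const η)).congr_deriv ?_
    match_scalars <;> (field_simp; try ring)
  · -- v' = ‖w‖²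
    rw [hwnorm]
    simp only [v, Real.tanh_eq_sinh_div_cosh]
    refine (htanh.const_mul c).congr_deriv ?_
    ring
  · -- w' = -v w - ‖w‖² s
    rw [show (-(v τ) • w τ - ‖w τ‖ ^ 2 • s τ : E) =
        -(c * Real.tanh (c * τ)) • w τ -
          (c ^ 2 * ((Real.cosh (c * τ))⁻¹) ^ 2) • s τ by rw [hwnorm]]
    simp only [hw_eq, hs_eq, Real.tanh_eq_sinh_div_cosh]
    have h1 : HasDerivAt (fun t : ℝ => c * (Real.cosh (c * t))⁻¹ ^ 2)
        (c * (2 * (Real.cosh (c * τ))⁻¹ ^ 1 *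
          (-(Real.sinh (c * τ) * c) / Real.cosh (c * τ) ^ 2))) τ := (hinv.pow 2).const_mul c
    have h2 : HasDerivAt
        (fun t : ℝ => -(c * Real.sinh (c * t) * (Real.cosh (c * t))⁻¹ ^ 2))
        (-((c * (Real.cosh (c * τ) * c)) * (Real.cosh (c * τ))⁻¹ ^ 2 +
          (c * Real.sinh (c * τ)) * (2 * (Real.cosh (c * τ))⁻¹ ^ 1 *
          (-(Real.sinh (c * τ) * c) / Real.cosh (c * τ) ^ 2)))) τ := by
      refine ((hsinh.const_mul c).mul (hinv.pow 2)).neg.congr_deriv ?_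
      norm_num [Pi.pow_apply]
    refine ((h1.smul_const ξ).add (h2.smul_const η)).congr_deriv ?_
    match_scalars
    · field_simp
      try ring
      try linear_combination (-c ^ 2) * hCS
    · field_simp
      try ring
      try linear_combination (-c ^ 2) * hCS
  · -- energy
    rw [hwnorm]
    simp only [v, Real.tanh_eq_sinh_div_cosh]
    field_simp
    linear_combination (Real.sinh (c * τ) ^ 2 + 1) * hc2 + (-(2 * h)) * hCS
end

section
/- The solution at infinity s(τ) = ξ sin θ(τ) + η cos θ(τ), v(τ) = √(2h) tanh(√(2h)τ) with θ(τ) = arctan(sinh(√(2h)τ)) is heteroclinic: as τ → −∞ it converges to the equilibrium (ρ,s,v,w) = (0, −ξ, −√(2h), 0), and as τ → +∞ it converges to (0, ξ, √(2h), 0). -/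
open Filter

lemma aux_sinh_atTop : Tendsto Real.sinh atTop atTop := by
  have : Tendsto (fun x : ℝ => (Real.exp x - Real.exp (-x)) / 2) atTop atTop := by
    apply Tendsto.atTop_div_const (by norm_num)
    have h1 : Tendsto (fun x : ℝ => Real.exp x + -Real.exp (-x)) atTop atTop :=
      Real.tendsto_exp_atTop.atTop_add
        ((Real.tendsto_exp_atBot.comp tendsto_neg_atTop_atBot).neg)
    exact h1.congr (fun x => by ring)
  exact this.congr (fun x => (Real.sinh_eq x).symm)

lemma aux_cosh_atTop : Tendsto Real.cosh atTop atTop := by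
  have : Tendsto (fun x : ℝ => (Real.exp x + Real.exp (-x)) / 2) atTop atTop := by
    apply Tendsto.atTop_div_const (by norm_num)
    exact Real.tendsto_exp_atTop.atTop_add
      (Real.tendsto_exp_atBot.comp tendsto_neg_atTop_atBot)
  exact this.congr (fun x => (Real.cosh_eq x).symm)

lemma aux_tanh_eq (x : ℝ) : Real.tanh x = 1 - 2 / (Real.exp (2 * x) + 1) := by
  have h1 : Real.exp (2 * x) = Real.exp x * Real.exp x := by
    rw [← Real.exp_add]; ring_nf
  have h2 : Real.exp x * Real.exp (-x) = 1 := by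
    rw [← Real.exp_add]; simp
  have hc : Real.cosh x ≠ 0 := ne_of_gt (Real.cosh_pos x)
  rw [Real.tanh_eq_sinh_div_cosh, Real.sinh_eq, Real.cosh_eq]
  have hpos : Real.exp (2 * x) + 1 > 0 := by positivity
  field_simp
  rw [show x * 2 = 2 * x by ring, h1]
  nlinarith [Real.exp_pos x, Real.exp_pos (-x), congrArg (fun t => Real.exp x * t) h2]

lemma aux_tanh_atTop : Tendsto Real.tanh atTop (nhds 1) := by
  have : Tendsto (fun x : ℝ => 1 - 2 / (Real.exp (2 * x) + 1)) atTop (nhds 1) := by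
    have h2 : Tendsto (fun x : ℝ => 2 / (Real.exp (2 * x) + 1)) atTop (nhds 0) :=
      tendsto_const_nhds.div_atTop
        ((Real.tendsto_exp_atTop.comp
          (tendsto_id.const_mul_atTop (by norm_num : (0:ℝ) < 2))).atTop_add
          tendsto_const_nhds)
    simpa using tendsto_const_nhds.sub h2
  exact this.congr (fun x => (aux_tanh_eq x).symm)

/-- The great-circle solution at infinity is heteroclinic from
(0, −ξ, −√(2h), 0) to (0, ξ, √(2h), 0). -/
theorem stmt5 {E : Type*} [NormedAddCommGroup E] [InnerProductSpace ℝ E]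
    (ξ η : E) (hξ : ‖ξ‖ = 1) (hη : ‖η‖ = 1) (hor : (inner ℝ ξ η : ℝ) = 0)
    (h : ℝ) (hh : 0 < h) :
    let c := Real.sqrt (2 * h)
    let θ := fun τ : ℝ => Real.arctan (Real.sinh (c * τ))
    let v := fun τ : ℝ => c * Real.tanh (c * τ)
    let s := fun τ : ℝ => Real.sin (θ τ) • ξ + Real.cos (θ τ) • η
    let w := fun τ : ℝ =>
      (c / Real.cosh (c * τ)) • (Real.cos (θ τ) • ξ - Real.sin (θ τ) • η)
    (Tendsto s atBot (nhds (-ξ)) ∧ Tendsto v atBot (nhds (-c)) ∧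
      Tendsto w atBot (nhds 0)) ∧
    (Tendsto s atTop (nhds ξ) ∧ Tendsto v atTop (nhds c) ∧
      Tendsto w atTop (nhds 0)) := by
  intro c θ v s w
  have hc : 0 < c := Real.sqrt_pos.mpr (by linarith)
  -- basic: c * τ tends to ±∞
  have hctT : Tendsto (fun τ : ℝ => c * τ) atTop atTop :=
    tendsto_id.const_mul_atTop hc
  have hctB : Tendsto (fun τ : ℝ => c * τ) atBot atBot :=
    tendsto_id.const_mul_atBot hc
  -- sinh composed
  have hsinhT : Tendsto (fun τ : ℝ => Real.sinh (c * τ)) atTop atTop :=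
    aux_sinh_atTop.comp hctT
  have hsinhB : Tendsto (fun τ : ℝ => Real.sinh (c * τ)) atBot atBot := by
    have : Tendsto Real.sinh atBot atBot := by
      have := tendsto_neg_atTop_atBot.comp (aux_sinh_atTop.comp tendsto_neg_atBot_atTop)
      exact this.congr (fun x => by simp [Function.comp, Real.sinh_neg])
    exact this.comp hctB
  -- θ limits
  have hθT : Tendsto θ atTop (nhds (Real.pi / 2)) :=
    tendsto_nhds_of_tendsto_nhdsWithin (Real.tendsto_arctan_atTop.comp hsinhT)
  have hθB : Tendsto θ atBot (nhds (-(Real.pi / 2))) :=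
    tendsto_nhds_of_tendsto_nhdsWithin (Real.tendsto_arctan_atBot.comp hsinhB)
  -- sin/cos limits
  have hsinT : Tendsto (fun τ => Real.sin (θ τ)) atTop (nhds 1) := by
    have := (Real.continuous_sin.continuousAt (x := Real.pi / 2)).tendsto.comp hθT
    simpa [Function.comp_def] using this
  have hcosT : Tendsto (fun τ => Real.cos (θ τ)) atTop (nhds 0) := by
    have := (Real.continuous_cos.continuousAt (x := Real.pi / 2)).tendsto.comp hθT
    simpa [Function.comp_def] using this
  have hsinB : Tendsto (fun τ => Real.sin (θ τ)) atBot (nhds (-1)) := by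
    have := (Real.continuous_sin.continuousAt (x := -(Real.pi / 2))).tendsto.comp hθB
    simpa [Function.comp_def] using this
  have hcosB : Tendsto (fun τ => Real.cos (θ τ)) atBot (nhds 0) := by
    have := (Real.continuous_cos.continuousAt (x := -(Real.pi / 2))).tendsto.comp hθB
    simpa [Function.comp_def] using this
  -- s limits
  have hsT : Tendsto s atTop (nhds ξ) := by
    have := (hsinT.smul_const ξ).add (hcosT.smul_const η)
    simpa using this
  have hsB : Tendsto s atBot (nhds (-ξ)) := by
    have := (hsinB.smul_const ξ).add (hcosB.smul_const η)
    simpa using this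
  -- v limits
  have htanhB : Tendsto Real.tanh atBot (nhds (-1)) := by
    have := (aux_tanh_atTop.comp tendsto_neg_atBot_atTop).neg
    exact this.congr (fun x => by simp [Real.tanh_eq_sinh_div_cosh, Real.sinh_neg,
      Real.cosh_neg, neg_div])
  have hvT : Tendsto v atTop (nhds c) := by
    have := (aux_tanh_atTop.comp hctT).const_mul c
    simpa using this
  have hvB : Tendsto v atBot (nhds (-c)) := by
    have := (htanhB.comp hctB).const_mul c
    simpa using this
  -- w limits
  have hcoshT : Tendsto (fun τ : ℝ => Real.cosh (c * τ)) atTop atTop :=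
    aux_cosh_atTop.comp hctT
  have hcoshB : Tendsto (fun τ : ℝ => Real.cosh (c * τ)) atBot atTop := by
    have : Tendsto Real.cosh atBot atTop := by
      have := aux_cosh_atTop.comp tendsto_neg_atBot_atTop
      exact this.congr (fun x => by simp [Real.cosh_neg])
    exact this.comp hctB
  have hbound : ∀ τ : ℝ, ‖Real.cos (θ τ) • ξ - Real.sin (θ τ) • η‖ ≤ 2 := by
    intro τ
    calc ‖Real.cos (θ τ) • ξ - Real.sin (θ τ) • η‖
        ≤ ‖Real.cos (θ τ) • ξ‖ + ‖Real.sin (θ τ) • η‖ := norm_sub_le _ _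
      _ = |Real.cos (θ τ)| * ‖ξ‖ + |Real.sin (θ τ)| * ‖η‖ := by
          simp [norm_smul]
      _ ≤ 1 * 1 + 1 * 1 := by
          gcongr <;> first
            | exact Real.abs_cos_le_one _
            | exact Real.abs_sin_le_one _
            | simp [hξ, hη]
      _ = 2 := by norm_num
  have hwT : Tendsto w atTop (nhds 0) := by
    apply Filter.Tendsto.zero_smul_isBoundedUnder_le
    · exact tendsto_const_nhds.div_atTop hcoshT
    · exact isBoundedUnder_of ⟨2, hbound⟩
  have hwB : Tendsto w atBot (nhds 0) := by
    apply Filter.Tendsto.zero_smul_isBoundedUnder_le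
    · exact tendsto_const_nhds.div_atTop hcoshB
    · exact isBoundedUnder_of ⟨2, hbound⟩
  exact ⟨⟨hsB, hvB, hwB⟩, ⟨hsT, hvT, hwT⟩⟩
end

section
/- For the hyperbolic Kepler orbit, with s(τ) = q(τ)/r(τ), q(τ) = (ae − a cosh(ωτ), a√(e²−1) sinh(ωτ)), r(τ) = a√μ(e cosh(ωτ) − 1), and s₀' = (1/(e√μ))(−1, √(e²−1)), the limit s₁' = lim_{τ→+∞} e^{ωτ}(s(τ) − s₀') exists and equals (2/(e²√μ))(e²−1, √(e²−1)). -/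
open Filter

/-- The rescaled limit s₁' = lim_{τ→+∞} e^{ωτ}(s(τ) − s₀') for the hyperbolic Kepler
orbit equals (2/(e²√μ))(e²−1, √(e²−1)). -/
theorem stmt12 (a e μ ω : ℝ) (ha : 0 < a) (he : 1 < e) (hμ : 0 < μ) (hω : 0 < ω) :
    let q : ℝ → ℝ × ℝ := fun τ =>
      (a * e - a * Real.cosh (ω * τ), a * Real.sqrt (e ^ 2 - 1) * Real.sinh (ω * τ))
    let r : ℝ → ℝ := fun τ => a * Real.sqrt μ * (e * Real.cosh (ω * τ) - 1)
    let s : ℝ → ℝ × ℝ := fun τ => (r τ)⁻¹ • q τ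
    let s₀' : ℝ × ℝ := (e * Real.sqrt μ)⁻¹ • ((-1 : ℝ), Real.sqrt (e ^ 2 - 1))
    Tendsto (fun τ => Real.exp (ω * τ) • (s τ - s₀')) atTop
      (nhds ((2 / (e ^ 2 * Real.sqrt μ)) • ((e ^ 2 - 1 : ℝ), Real.sqrt (e ^ 2 - 1)))) := by
  intro q r s s₀'
  have he0 : (0:ℝ) < e := lt_trans one_pos he
  have hμ' : (0:ℝ) < Real.sqrt μ := Real.sqrt_pos.2 hμ
  have hD : ∀ τ, 0 < e * Real.cosh (ω * τ) - 1 := by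
    intro τ; nlinarith [Real.one_le_cosh (ω * τ)]
  have hlin : Tendsto (fun τ : ℝ => ω * τ) atTop atTop := tendsto_id.const_mul_atTop hω
  have hEtop : Tendsto (fun τ => Real.exp (ω * τ)) atTop atTop :=
    Real.tendsto_exp_atTop.comp hlin
  have hEinv : Tendsto (fun τ => (Real.exp (ω * τ))⁻¹) atTop (nhds 0) :=
    hEtop.inv_tendsto_atTop
  have hDtop : Tendsto (fun τ => e * Real.cosh (ω * τ) - 1) atTop atTop := by
    have hge : ∀ τ, e / 2 * Real.exp (ω * τ) - 1 ≤ e * Real.cosh (ω * τ) - 1 := by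
      intro τ
      have h1 := Real.exp_pos (-(ω * τ))
      rw [Real.cosh_eq]
      nlinarith
    have h2 : Tendsto (fun τ => e / 2 * Real.exp (ω * τ) - 1) atTop atTop := by
      have := hEtop.const_mul_atTop (show (0:ℝ) < e / 2 by positivity)
      simpa [sub_eq_add_neg] using tendsto_atTop_add_const_right atTop (-1) this
    exact tendsto_atTop_mono hge h2
  have hDinv : Tendsto (fun τ => (e * Real.cosh (ω * τ) - 1)⁻¹) atTop (nhds 0) :=
    hDtop.inv_tendsto_atTop
  -- denominator expression
  have hden : Tendsto (fun τ => e + e * ((Real.exp (ω * τ))⁻¹) ^ 2 - 2 * (Real.exp (ω * τ))⁻¹)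
      atTop (nhds e) := by
    have h1 : Tendsto (fun τ => e + e * ((Real.exp (ω * τ))⁻¹) ^ 2) atTop
        (nhds (e + e * 0 ^ 2)) := tendsto_const_nhds.add ((hEinv.pow 2).const_mul e)
    have h2 := h1.sub (hEinv.const_mul 2)
    simpa using h2
  have hdne : ∀ τ, e + e * ((Real.exp (ω * τ))⁻¹) ^ 2 - 2 * (Real.exp (ω * τ))⁻¹ ≠ 0 := by
    intro τ
    have hx : 0 < (Real.exp (ω * τ))⁻¹ := inv_pos.2 (Real.exp_pos _)
    nlinarith [sq_nonneg (e * (Real.exp (ω * τ))⁻¹ - 1), hx, he]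
  have hd : ∀ τ, 2 / (e + e * ((Real.exp (ω * τ))⁻¹) ^ 2 - 2 * (Real.exp (ω * τ))⁻¹)
      = Real.exp (ω * τ) / (e * Real.cosh (ω * τ) - 1) := by
    intro τ
    have hEne : Real.exp (ω * τ) ≠ 0 := (Real.exp_pos _).ne'
    have hDne : e * Real.cosh (ω * τ) - 1 ≠ 0 := (hD τ).ne'
    have hd2 : e + e * ((Real.exp (ω * τ))⁻¹) ^ 2 - 2 * (Real.exp (ω * τ))⁻¹
        = 2 * (e * Real.cosh (ω * τ) - 1) / Real.exp (ω * τ) := by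
      rw [Real.cosh_eq, Real.exp_neg]
      field_simp
    rw [hd2, div_div_eq_mul_div, mul_comm (2:ℝ) (Real.exp (ω * τ)), mul_comm (2:ℝ),
      mul_div_mul_right _ _ (two_ne_zero)]
  have hA : Tendsto (fun τ => Real.exp (ω * τ) / (e * Real.cosh (ω * τ) - 1)) atTop
      (nhds (2 / e)) := by
    have h1 : Tendsto (fun τ => 2 / (e + e * ((Real.exp (ω * τ))⁻¹) ^ 2
        - 2 * (Real.exp (ω * τ))⁻¹)) atTop (nhds (2 / e)) :=
      tendsto_const_nhds.div hden he0.ne'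
    exact h1.congr hd
  have hB : Tendsto (fun τ => (Real.exp (ω * τ) - e) / (e * Real.cosh (ω * τ) - 1)) atTop
      (nhds (2 / e)) := by
    have h := hA.sub (hDinv.const_mul e)
    have h2 : Tendsto (fun τ => Real.exp (ω * τ) / (e * Real.cosh (ω * τ) - 1)
        - e * (e * Real.cosh (ω * τ) - 1)⁻¹) atTop (nhds (2 / e)) := by simpa using h
    refine h2.congr fun τ => ?_
    rw [sub_div]
    ring
  have key : ∀ τ, Real.exp (ω * τ) • (s τ - s₀') =
      ((e ^ 2 - 1) / (e * Real.sqrt μ) * (Real.exp (ω * τ) / (e * Real.cosh (ω * τ) - 1)),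
       Real.sqrt (e ^ 2 - 1) / (e * Real.sqrt μ)
         * ((Real.exp (ω * τ) - e) / (e * Real.cosh (ω * τ) - 1))) := by
    intro τ
    have hEne : Real.exp (ω * τ) ≠ 0 := (Real.exp_pos _).ne'
    have hDne : e * Real.cosh (ω * τ) - 1 ≠ 0 := (hD τ).ne'
    have hsub : Real.sinh (ω * τ) = Real.cosh (ω * τ) - (Real.exp (ω * τ))⁻¹ := by
      rw [Real.cosh_eq, Real.sinh_eq, Real.exp_neg]
      ring
    simp only [s, q, r, s₀', Prod.smul_mk, smul_eq_mul, Prod.mk_sub_mk, Prod.mk.injEq]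
    constructor
    · rw [mul_sub]
      field_simp
      ring
    · rw [hsub, mul_sub]
      field_simp
      ring
  have hA' := hA.const_mul ((e ^ 2 - 1) / (e * Real.sqrt μ))
  have hB' := hB.const_mul (Real.sqrt (e ^ 2 - 1) / (e * Real.sqrt μ))
  have hprod := hA'.prodMk_nhds hB'
  refine Tendsto.congr (fun τ => (key τ).symm) ?_
  have hpt : (2 / (e ^ 2 * Real.sqrt μ)) • ((e ^ 2 - 1 : ℝ), Real.sqrt (e ^ 2 - 1))
      = ((e ^ 2 - 1) / (e * Real.sqrt μ) * (2 / e),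
         Real.sqrt (e ^ 2 - 1) / (e * Real.sqrt μ) * (2 / e)) := by
    simp only [Prod.smul_mk, smul_eq_mul, Prod.mk.injEq]
    constructor
    · field_simp
    · field_simp
  rw [hpt]
  exact hprod
end

section
/- Kernel of the averaged Hessian: for a planar, non-collinear, collision-free configuration ξ ∈ (ℝ²)^n, the symmetric bilinear form Q(β) = 2Σ_{i<j} (m_i m_j / r_{ij}³)(β_{ij}·v_{ij})², where β_{ij} = β_i − β_j, r_{ij} = |ξ_i − ξ_j|, u_{ij} = (ξ_i − ξ_j)/r_{ij} and v_{ij} = u_{ij}⊥, has null space exactly the 3-dimensional span of ξ, (e₁, e₁, …, e₁), and (e₂, e₂, …, e₂), where e₁, e₂ are the standard basis vectors of ℝ². -/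
noncomputable section
namespace S17
abbrev E := EuclideanSpace ℝ (Fin 2)

def cr (x y : E) : ℝ := x 0 * y 1 - x 1 * y 0

lemma cr_anti (x y : E) : cr x y = - cr y x := by simp [cr]; ring

lemma eq_zero_iff (y : E) : y = 0 ↔ y 0 = 0 ∧ y 1 = 0 := by
  constructor
  · intro h; subst h; exact ⟨rfl, rfl⟩
  · rintro ⟨h0, h1⟩; ext i; fin_cases i <;> simpa

lemma parallel {y x : E} (hy : y ≠ 0) (h : cr y x = 0) : ∃ t : ℝ, x = t • y := by
  have hy' : y 0 ≠ 0 ∨ y 1 ≠ 0 := by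
    by_contra hc; push_neg at hc; exact hy ((eq_zero_iff y).2 hc)
  rcases hy' with h0 | h1
  · refine ⟨x 0 / y 0, PiLp.ext fun i => ?_⟩
    have : ∀ i, ((x 0 / y 0) • y) i = (x 0 / y 0) * y i := fun i => rfl
    fin_cases i <;> rw [this]
    · simp only [Fin.zero_eta, Fin.mk_one]; field_simp
    · unfold cr at h; simp only [Fin.zero_eta, Fin.mk_one]; field_simp; linarith [h]
  · refine ⟨x 1 / y 1, PiLp.ext fun i => ?_⟩
    have : ∀ i, ((x 1 / y 1) • y) i = (x 1 / y 1) * y i := fun i => rfl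
    fin_cases i <;> rw [this]
    · unfold cr at h; simp only [Fin.zero_eta, Fin.mk_one]; field_simp; linarith [h]
    · simp only [Fin.zero_eta, Fin.mk_one]; field_simp

end S17

namespace S17

lemma cr_sub_smul (a b : E) (s u : ℝ) : cr (a - b) (s • a - u • b) = (s - u) * cr a b := by
  have hs : ∀ (s : ℝ) (a : E) (i : Fin 2), (s • a) i = s * a i := fun _ _ _ => rfl
  have hsub : ∀ (a b : E) (i : Fin 2), (a - b) i = a i - b i := fun _ _ _ => rfl
  simp only [cr, hsub, hs]; ring

lemma cr_smul_left (u : ℝ) (x y : E) : cr (u • x) y = u * cr x y := by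
  have hs : ∀ (s : ℝ) (a : E) (i : Fin 2), (s • a) i = s * a i := fun _ _ _ => rfl
  simp only [cr, hs]; ring

lemma rigid {n : ℕ} (hn : 3 ≤ n) (ξ β : Fin n → E)
    (hfree : ∀ i j, i ≠ j → ξ i ≠ ξ j)
    (hnoncol : ¬ ∃ (a b : E), ∀ i, ∃ t : ℝ, ξ i = a + t • b)
    (h : ∀ i j, cr (ξ i - ξ j) (β i - β j) = 0) :
    ∃ (l : ℝ) (c : E), ∀ i, β i = l • ξ i + c := by
  set i0 : Fin n := ⟨0, by omega⟩ with hi0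
  set i1 : Fin n := ⟨1, by omega⟩ with hi1
  have h01 : i0 ≠ i1 := by simp [hi0, hi1, Fin.ext_iff]
  set b : E := ξ i1 - ξ i0 with hb
  have hbne : b ≠ 0 := sub_ne_zero.2 (hfree i1 i0 h01.symm)
  -- find r off the line
  have hr : ∃ r, cr b (ξ r - ξ i0) ≠ 0 := by
    by_contra hc
    push_neg at hc
    refine hnoncol ⟨ξ i0, b, fun i => ?_⟩
    obtain ⟨t, ht⟩ := parallel hbne (hc i)
    exact ⟨t, by rw [← ht]; abel⟩
  obtain ⟨r, hrne⟩ := hr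
  -- coefficients t i with β i - β i0 = t i • (ξ i - ξ i0)
  have hex : ∀ i, ∃ t : ℝ, β i - β i0 = t • (ξ i - ξ i0) := by
    intro i
    by_cases hi : i = i0
    · exact ⟨0, by simp [hi]⟩
    · have hd : ξ i - ξ i0 ≠ 0 := sub_ne_zero.2 (hfree i i0 hi)
      exact parallel hd (h i i0)
  choose t ht using hex
  -- triangle relation
  have key : ∀ i j, cr (ξ i - ξ i0) (ξ j - ξ i0) ≠ 0 → t i = t j := by
    intro i j hij
    have e1 : ξ i - ξ j = (ξ i - ξ i0) - (ξ j - ξ i0) := by abel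
    have e2 : β i - β j = t i • (ξ i - ξ i0) - t j • (ξ j - ξ i0) := by
      rw [← ht i, ← ht j]; abel
    have := h i j
    rw [e1, e2, cr_sub_smul] at this
    have := mul_eq_zero.1 this
    rcases this with h' | h'
    · linarith
    · exact absurd h' hij
  set l : ℝ := t i1 with hl
  have hall : ∀ i, t i • (ξ i - ξ i0) = l • (ξ i - ξ i0) := by
    intro i
    by_cases hi : i = i0
    · simp [hi]
    · have hd : ξ i - ξ i0 ≠ 0 := sub_ne_zero.2 (hfree i i0 hi)
      by_cases hcase : cr b (ξ i - ξ i0) ≠ 0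
      · have hc2 : cr (ξ i - ξ i0) (ξ i1 - ξ i0) ≠ 0 := by
          rw [cr_anti, neg_ne_zero]; exact hcase
        rw [key i i1 hc2]
      · push_neg at hcase
        obtain ⟨u, hu⟩ := parallel hbne hcase
        have hune : u ≠ 0 := by
          intro h0; exact hd (by rw [hu, h0, zero_smul])
        have hir : cr (ξ i - ξ i0) (ξ r - ξ i0) ≠ 0 := by
          rw [hu, cr_smul_left]
          refine mul_ne_zero hune ?_
          rwa [hb] at hrne
        have h1r : t i1 = t r := by
          apply key
          rwa [hb] at hrne
        rw [key i r hir, ← h1r]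
  refine ⟨l, β i0 - l • ξ i0, fun i => ?_⟩
  have := ht i
  rw [hall i] at this
  have : β i = l • (ξ i - ξ i0) + β i0 := by rw [← this]; abel
  rw [this, smul_sub]; abel

end S17

namespace S17

lemma cr_neg_neg (x y : E) : cr (-x) (-y) = cr x y := by
  have hn : ∀ (a : E) (i : Fin 2), (-a) i = -(a i) := fun _ _ => rfl
  simp only [cr, hn]; ring

lemma cr_zero_left (y : E) : cr 0 y = 0 := by
  have : ∀ i : Fin 2, (0 : E) i = 0 := fun _ => rfl
  simp [cr, this]

lemma cr_smul_self (a : ℝ) (d : E) : cr d (a • d) = 0 := by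
  have hs : ∀ (s : ℝ) (x : E) (i : Fin 2), (s • x) i = s * x i := fun _ _ _ => rfl
  simp only [cr, hs]; ring

lemma inner_perp (x d : E) (r : ℝ) :
    (inner ℝ x (r • (WithLp.toLp 2 ![-(d 1), d 0] : E)) : ℝ) = r * cr d x := by
  have hs : ∀ (s : ℝ) (a : E) (i : Fin 2), (s • a) i = s * a i := fun _ _ _ => rfl
  simp only [PiLp.inner_apply, RCLike.inner_apply, conj_trivial, Fin.sum_univ_two, hs]
  simp [cr]
  ring

lemma basis_decomp (v : E) :
    v = v 0 • (EuclideanSpace.single 0 1 : E) + v 1 • (EuclideanSpace.single 1 1 : E) := by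
  have hs : ∀ (s : ℝ) (a : E) (i : Fin 2), (s • a) i = s * a i := fun _ _ _ => rfl
  have ha : ∀ (a b : E) (i : Fin 2), (a + b) i = a i + b i := fun _ _ _ => rfl
  ext i
  rw [ha, hs, hs]
  fin_cases i <;> simp [EuclideanSpace.single_apply]

lemma mem_span_triple {V : Type*} [AddCommGroup V] [Module ℝ V] (x y z v : V) :
    v ∈ Submodule.span ℝ ({x, y, z} : Set V) ↔ ∃ a b c : ℝ, v = a • x + b • y + c • z := by
  constructor
  · intro hv
    rw [Submodule.mem_span_insert] at hv
    obtain ⟨a, w, hw, rfl⟩ := hv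
    rw [Submodule.mem_span_insert] at hw
    obtain ⟨b, w2, hw2, rfl⟩ := hw
    rw [Submodule.mem_span_singleton] at hw2
    obtain ⟨c, rfl⟩ := hw2
    exact ⟨a, b, c, by rw [add_assoc]⟩
  · rintro ⟨a, b, c, rfl⟩
    refine Submodule.add_mem _ (Submodule.add_mem _ ?_ ?_) ?_ <;>
      refine Submodule.smul_mem _ _ (Submodule.subset_span ?_) <;> simp

end S17


open S17


/-- Kernel of the averaged Hessian form for a planar, non-collinear, collision-free
configuration: exactly the 3-dimensional span of ξ and the two translations. -/
theorem stmt17 {n : ℕ} (hn : 3 ≤ n) (m : Fin n → ℝ) (hm : ∀ i, 0 < m i)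
    (ξ : Fin n → EuclideanSpace ℝ (Fin 2))
    (hfree : ∀ i j, i ≠ j → ξ i ≠ ξ j)
    (hnoncol : ¬ ∃ (a b : EuclideanSpace ℝ (Fin 2)), ∀ i, ∃ t : ℝ, ξ i = a + t • b)
    (perp : EuclideanSpace ℝ (Fin 2) → EuclideanSpace ℝ (Fin 2))
    (hperp : ∀ p, perp p = (WithLp.toLp 2 ![-(p 1), p 0] : EuclideanSpace ℝ (Fin 2))) :
    let Q : (Fin n → EuclideanSpace ℝ (Fin 2)) → ℝ := fun β =>
      2 * ∑ p ∈ Finset.univ.filter (fun p : Fin n × Fin n => p.1 < p.2),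
        (m p.1 * m p.2 / ‖ξ p.1 - ξ p.2‖ ^ 3) *
          (inner ℝ (β p.1 - β p.2) ((‖ξ p.1 - ξ p.2‖)⁻¹ • perp (ξ p.1 - ξ p.2)) : ℝ) ^ 2
    let e₁ : EuclideanSpace ℝ (Fin 2) := EuclideanSpace.single 0 1
    let e₂ : EuclideanSpace ℝ (Fin 2) := EuclideanSpace.single 1 1
    (∀ β, Q β = 0 ↔ β ∈ Submodule.span ℝ
      ({ξ, fun _ => e₁, fun _ => e₂} : Set (Fin n → EuclideanSpace ℝ (Fin 2)))) ∧
    Module.finrank ℝ ↥(Submodule.span ℝ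
      ({ξ, fun _ => e₁, fun _ => e₂} : Set (Fin n → EuclideanSpace ℝ (Fin 2)))) = 3 := by
  intro Q e₁ e₂
  set f1 : Fin n → E := fun _ => e₁ with hf1
  set f2 : Fin n → E := fun _ => e₂ with hf2
  constructor
  · intro β
    -- Q β = 0 iff all cross products vanish
    have hQ : Q β = 0 ↔ ∀ i j : Fin n, i < j → cr (ξ i - ξ j) (β i - β j) = 0 := by
      unfold Q
      rw [mul_eq_zero]
      have h2 : (2 : ℝ) ≠ 0 := two_ne_zero
      have hnn : ∀ p ∈ Finset.univ.filter (fun p : Fin n × Fin n => p.1 < p.2),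
          0 ≤ (m p.1 * m p.2 / ‖ξ p.1 - ξ p.2‖ ^ 3) *
            (inner ℝ (β p.1 - β p.2) ((‖ξ p.1 - ξ p.2‖)⁻¹ • perp (ξ p.1 - ξ p.2)) : ℝ) ^ 2 :=
        fun p _ => mul_nonneg (div_nonneg (mul_nonneg (hm p.1).le (hm p.2).le)
          (pow_nonneg (norm_nonneg _) _)) (sq_nonneg _)
      rw [Finset.sum_eq_zero_iff_of_nonneg hnn]
      constructor
      · intro h
        rcases h with h | h
        · exact absurd h h2
        · intro i j hij
          have hmem : (i, j) ∈ Finset.univ.filter (fun p : Fin n × Fin n => p.1 < p.2) := by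
            simp [hij]
          have := h (i, j) hmem
          have hne : ξ i ≠ ξ j := hfree i j (ne_of_lt hij)
          have hnorm : (0 : ℝ) < ‖ξ i - ξ j‖ := by
            rw [norm_sub_pos_iff]; exact hne
          have hC : (0 : ℝ) < m i * m j / ‖ξ i - ξ j‖ ^ 3 :=
            div_pos (mul_pos (hm i) (hm j)) (pow_pos hnorm _)
          rcases mul_eq_zero.1 this with h' | h'
          · exact absurd h' (ne_of_gt hC)
          · have hin : (inner ℝ (β i - β j) ((‖ξ i - ξ j‖)⁻¹ • perp (ξ i - ξ j)) : ℝ) = 0 :=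
              pow_eq_zero_iff (by norm_num) |>.1 h'
            rw [hperp, inner_perp] at hin
            rcases mul_eq_zero.1 hin with h'' | h''
            · exact absurd h'' (inv_ne_zero (ne_of_gt hnorm))
            · exact h''
      · intro h
        right
        intro p hp
        rw [Finset.mem_filter] at hp
        rw [hperp, inner_perp, h p.1 p.2 hp.2, mul_zero]
        ring
    rw [hQ, mem_span_triple]
    constructor
    · intro h
      have hall : ∀ i j : Fin n, cr (ξ i - ξ j) (β i - β j) = 0 := by
        intro i j
        rcases lt_trichotomy i j with hij | hij | hij
        · exact h i j hij
        · subst hij; rw [sub_self, sub_self, cr_zero_left]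
        · rw [show ξ i - ξ j = -(ξ j - ξ i) by abel,
            show β i - β j = -(β j - β i) by abel, cr_neg_neg]
          exact h j i hij
      obtain ⟨l, c, hc⟩ := rigid hn ξ β hfree hnoncol hall
      refine ⟨l, c 0, c 1, funext fun i => ?_⟩
      show β i = (l • ξ i + c 0 • e₁) + c 1 • e₂
      have : β i = l • ξ i + (c 0 • e₁ + c 1 • e₂) := by
        rw [hc i]
        congr 1
        exact basis_decomp c
      exact this.trans (add_assoc _ _ _).symm
    · rintro ⟨a, b, c, hβ⟩ i j hij
      have hsub : β i - β j = a • (ξ i - ξ j) := by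
        rw [hβ]
        show (a • ξ i + b • e₁ + c • e₂) - (a • ξ j + b • e₁ + c • e₂) = a • (ξ i - ξ j)
        rw [smul_sub]; abel
      rw [hsub]
      exact cr_smul_self a _
  · -- finrank
    have h01 : (⟨0, by omega⟩ : Fin n) ≠ ⟨1, by omega⟩ := by simp [Fin.ext_iff]
    have hli : LinearIndependent ℝ ![ξ, f1, f2] := by
      rw [Fintype.linearIndependent_iff]
      intro g hg
      have hi : ∀ i : Fin n, g 0 • ξ i + (g 1 • e₁ + g 2 • e₂) = 0 := by
        intro i
        have := congrFun hg i
        simpa [Fin.sum_univ_three, hf1, hf2, add_assoc] using this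
      have hg0 : g 0 = 0 := by
        by_contra hg0
        have hconst : ∀ i : Fin n, ξ i = (g 0)⁻¹ • (-(g 1 • e₁ + g 2 • e₂)) := by
          intro i
          have h1 := hi i
          have h2 : g 0 • ξ i = -(g 1 • e₁ + g 2 • e₂) :=
            eq_neg_of_add_eq_zero_left h1
          rw [← h2, smul_smul, inv_mul_cancel₀ hg0, one_smul]
        exact hfree _ _ h01 ((hconst _).trans (hconst _).symm)
      have hv : g 1 • e₁ + g 2 • e₂ = 0 := by
        have := hi ⟨0, by omega⟩
        rwa [hg0, zero_smul, zero_add] at this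
      have ha : ∀ (x y : E) (i : Fin 2), (x + y) i = x i + y i := fun _ _ _ => rfl
      have hs : ∀ (s : ℝ) (x : E) (i : Fin 2), (s • x) i = s * x i := fun _ _ _ => rfl
      have hv' : g 1 • (EuclideanSpace.single 0 1 : E) + g 2 • (EuclideanSpace.single 1 1 : E)
          = 0 := hv
      have hg1 : g 1 = 0 := by
        simpa [ha, hs, EuclideanSpace.single_apply] using congrArg (fun v : E => v 0) hv'
      have hg2 : g 2 = 0 := by
        simpa [ha, hs, EuclideanSpace.single_apply] using congrArg (fun v : E => v 1) hv'
      intro i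
      fin_cases i <;> assumption
    have hrange : Set.range ![ξ, f1, f2] = ({ξ, f1, f2} : Set (Fin n → E)) := by
      ext x
      simp [Matrix.range_cons, Matrix.range_empty]
      tauto
    have := finrank_span_eq_card hli
    rw [hrange] at this
    rw [this]
    simp
end
end

section
/- The change of variables for the exponential of the rescaled time: if t(τ) = a e^{v₀τ} − bτ + c + E(τ) where a > 0, v₀ > 0, b, c ∈ ℝ and E(τ) = O(e^{−v₀τ}·τ) as τ → +∞, then τ(t) = (1/v₀) log t − (log a)/v₀ + o(1) and e^{v₀τ} = t/a + (b/(a v₀)) log t + O(1) as t → +∞. -/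
open Filter Asymptotics

/-- Inversion of the time change t(τ) = a e^{v₀τ} − bτ + c + O(τe^{−v₀τ}):
τ = (1/v₀) log t − (log a)/v₀ + o(1) and e^{v₀τ} = t/a + (b/(av₀)) log t + O(1). -/
theorem stmt19 (a v₀ b c : ℝ) (ha : 0 < a) (hv₀ : 0 < v₀)
    (Err t : ℝ → ℝ)
    (ht : ∀ τ, t τ = a * Real.exp (v₀ * τ) - b * τ + c + Err τ)
    (hE : Err =O[atTop] fun τ => Real.exp (-v₀ * τ) * τ) :
    Tendsto (fun τ => τ - ((1 / v₀) * Real.log (t τ) - Real.log a / v₀))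
      atTop (nhds 0) ∧
    (fun τ => Real.exp (v₀ * τ) -
        (t τ / a + (b / (a * v₀)) * Real.log (t τ))) =O[atTop] (fun _ => (1:ℝ)) := by
  set r : ℝ → ℝ := fun τ => (-(b*τ) + c + Err τ) / (a * Real.exp (v₀ * τ)) with hrdef
  have hvt : Tendsto (fun τ : ℝ => v₀ * τ) atTop atTop :=
    tendsto_id.const_mul_atTop hv₀
  have h0 : Tendsto (fun τ => Real.exp (-v₀ * τ) * τ) atTop (nhds 0) := by
    have h1 := (Real.tendsto_pow_mul_exp_neg_atTop_nhds_zero 1).comp hvt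
    have h2 := h1.const_mul (1 / v₀)
    rw [mul_zero] at h2
    refine h2.congr (fun τ => ?_)
    simp only [Function.comp, pow_one]
    field_simp
  have hexpneg : Tendsto (fun τ => Real.exp (-v₀ * τ)) atTop (nhds 0) := by
    refine Real.tendsto_exp_atBot.comp ?_
    have h3 : Tendsto (fun τ => -(v₀ * τ)) atTop atBot := tendsto_neg_atBot_iff.mpr hvt
    exact h3.congr (fun τ => by ring)
  have hErr0 : Tendsto Err atTop (nhds 0) := hE.trans_tendsto h0
  have hr0 : Tendsto r atTop (nhds 0) := by
    have key : Tendsto (fun τ => ((-b) * (Real.exp (-v₀*τ) * τ) + c * Real.exp (-v₀*τ)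
        + Err τ * Real.exp (-v₀*τ)) * a⁻¹) atTop (nhds 0) := by
      have := (((h0.const_mul (-b)).add (hexpneg.const_mul c)).add
        (hErr0.mul hexpneg)).mul_const a⁻¹
      simpa using this
    refine key.congr (fun τ => ?_)
    have he : Real.exp (-v₀ * τ) = (Real.exp (v₀ * τ))⁻¹ := by
      rw [← Real.exp_neg]; ring_nf
    rw [hrdef]
    simp only [he]
    have hep : Real.exp (v₀ * τ) ≠ 0 := (Real.exp_pos _).ne'
    field_simp
  have hbig : ∀ᶠ τ in atTop, -(1:ℝ)/2 < r τ := by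
    have := hr0.eventually (eventually_gt_nhds (show -(1:ℝ)/2 < 0 by norm_num))
    exact this
  have hfact : ∀ τ, t τ = (a * Real.exp (v₀ * τ)) * (1 + r τ) := by
    intro τ
    have hep : a * Real.exp (v₀ * τ) ≠ 0 := by positivity
    rw [ht τ, hrdef]
    field_simp
    ring
  have hlog : ∀ᶠ τ in atTop, Real.log (t τ)
      = Real.log a + v₀ * τ + Real.log (1 + r τ) := by
    filter_upwards [hbig] with τ hτ
    have h1r : (0:ℝ) < 1 + r τ := by linarith
    rw [hfact τ, Real.log_mul (by positivity) h1r.ne',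
      Real.log_mul ha.ne' (Real.exp_pos _).ne', Real.log_exp]
  have hlog1r : Tendsto (fun τ => Real.log (1 + r τ)) atTop (nhds 0) := by
    have h1 : Tendsto (fun τ => 1 + r τ) atTop (nhds 1) := by
      simpa using tendsto_const_nhds.add hr0
    have := ((Real.continuousAt_log one_ne_zero).tendsto).comp h1
    simpa [Function.comp_def] using this
  constructor
  · have heq : (fun τ => τ - ((1 / v₀) * Real.log (t τ) - Real.log a / v₀))
        =ᶠ[atTop] fun τ => -(Real.log (1 + r τ)) / v₀ := by
      filter_upwards [hlog] with τ hτ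
      rw [hτ]; field_simp; ring
    refine Tendsto.congr' heq.symm ?_
    have := (hlog1r.neg).div_const v₀
    simpa using this
  · have heq : (fun τ => Real.exp (v₀ * τ) -
        (t τ / a + (b / (a * v₀)) * Real.log (t τ)))
        =ᶠ[atTop] fun τ => -(c/a) - Err τ / a
          - (b / (a * v₀)) * (Real.log a + Real.log (1 + r τ)) := by
      filter_upwards [hlog] with τ hτ
      rw [hτ, ht τ]
      field_simp
      ring
    have hlim : Tendsto (fun τ => -(c/a) - Err τ / a
        - (b / (a * v₀)) * (Real.log a + Real.log (1 + r τ))) atTop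
        (nhds (-(c/a) - 0/a - (b / (a*v₀)) * (Real.log a + 0))) := by
      exact ((tendsto_const_nhds.sub (hErr0.div_const a)).sub
        ((tendsto_const_nhds.add hlog1r).const_mul _))
    exact ((hlim.congr' heq.symm).isBigO_one ℝ)
end
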